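/- arXiv:2406.00871 — 4 statements merged into one kernel-verified Lean document; each statement's English description precedes it below -/
import Mathlib

section
/- Suppose two Laguerre tessellations {Lag_i(X,w)}_{i=1}^n and {Lag_i(Y,v)}_{i=1}^n of Ω (with pairwise distinct seeds X and Y respectively) have cells with the same positive volumes and the same centroids: vol(Lag_i(X,w)) = vol(Lag_i(Y,v)) > 0 and σ(Lag_i(X,w)) = σ(Lag_i(Y,v)) for all i. Then Lag_i(X,w) = Lag_i(Y,v) up to Lebesgue-null sets, for all i. In other words, a Laguerre tessellation is uniquely determined by the volumes and centroids of its cells. -/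
open Set MeasureTheory

private instance euclidHaar {d : ℕ} :
    (volume : Measure (EuclideanSpace ℝ (Fin d))).IsAddHaarMeasure := by
  rw [← (EuclideanSpace.basisFun (Fin d) ℝ).addHaar_eq_volume]
  infer_instance

open RealInnerProductSpace Bornology in
private lemma aux_hyperplane {d : ℕ} (a : EuclideanSpace ℝ (Fin d)) (ha : a ≠ 0) (b : ℝ) :
    volume {p : EuclideanSpace ℝ (Fin d) | ⟪p, a⟫ = b} = 0 := by
  set S : Submodule ℝ (EuclideanSpace ℝ (Fin d)) := LinearMap.ker (innerSL ℝ a : EuclideanSpace ℝ (Fin d) →ₗ[ℝ] ℝ) with hS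
  have hSne : S ≠ ⊤ := by
    intro h
    have : a ∈ S := h ▸ Submodule.mem_top
    rw [hS, LinearMap.mem_ker] at this
    exact ha ((inner_self_eq_zero (𝕜 := ℝ)).mp this)
  have haa : ⟪a, a⟫ ≠ 0 := fun h => ha ((inner_self_eq_zero (𝕜 := ℝ)).mp h)
  set p₀ : EuclideanSpace ℝ (Fin d) := (b / ⟪a, a⟫) • a with hp₀
  have hp₀b : ⟪p₀, a⟫ = b := by
    rw [hp₀, real_inner_smul_left, div_mul_cancel₀ _ haa]
  have hset : {p : EuclideanSpace ℝ (Fin d) | ⟪p, a⟫ = b}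
      = (fun p => p + (-p₀)) ⁻¹' (S : Set (EuclideanSpace ℝ (Fin d))) := by
    ext p
    simp only [Set.mem_setOf_eq, Set.mem_preimage, SetLike.mem_coe, hS, LinearMap.mem_ker,
      ContinuousLinearMap.coe_coe, innerSL_apply_apply]
    rw [inner_add_right, inner_neg_right]
    have hab : ⟪a, p₀⟫ = b := (real_inner_comm p₀ a).trans hp₀b
    rw [hab, real_inner_comm p a]
    constructor
    · intro h; rw [h]; ring
    · intro h; linarith
  rw [hset, measure_preimage_add_right]
  exact Measure.addHaar_submodule volume S hSne

open Bornology in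
private lemma aux_integrableOn {d : ℕ} {F : Type*} [NormedAddCommGroup F] [NormedSpace ℝ F]
    {Ω s : Set (EuclideanSpace ℝ (Fin d))} (hbdd : IsBounded Ω) (hs : s ⊆ Ω)
    (f : EuclideanSpace ℝ (Fin d) → F) (hf : Continuous f) : IntegrableOn f s volume :=
  (hf.continuousOn.integrableOn_compact hbdd.isCompact_closure).mono_set
    (hs.trans subset_closure)

open RealInnerProductSpace Bornology in
private lemma aux_expand {d : ℕ} {Ω A : Set (EuclideanSpace ℝ (Fin d))}
    (hbdd : IsBounded Ω) (hA : A ⊆ Ω) (q : EuclideanSpace ℝ (Fin d)) (r : ℝ) :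
    ∫ p in A, (‖p - q‖ ^ 2 - r) =
      (∫ p in A, ‖p‖ ^ 2) - 2 * ⟪q, ∫ p in A, p⟫ + (‖q‖ ^ 2 - r) * (volume A).toReal := by
  have hpt : ∀ p : EuclideanSpace ℝ (Fin d),
      ‖p - q‖ ^ 2 - r = (‖p‖ ^ 2 - 2 * ⟪q, p⟫) + (‖q‖ ^ 2 - r) := by
    intro p
    have h := norm_sub_sq_real p q
    have h2 : ⟪p, q⟫ = ⟪q, p⟫ := real_inner_comm q p
    linarith
  have h1 : IntegrableOn (fun p : EuclideanSpace ℝ (Fin d) => ‖p‖ ^ 2) A volume :=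
    aux_integrableOn hbdd hA _ (continuous_norm.pow 2)
  have hid : IntegrableOn (fun p : EuclideanSpace ℝ (Fin d) => p) A volume :=
    aux_integrableOn hbdd hA _ continuous_id
  have h2 : IntegrableOn (fun p : EuclideanSpace ℝ (Fin d) => 2 * ⟪q, p⟫) A volume :=
    aux_integrableOn hbdd hA _ (continuous_const.mul (continuous_const.inner continuous_id))
  have hsub : IntegrableOn (fun p : EuclideanSpace ℝ (Fin d) => ‖p‖ ^ 2 - 2 * ⟪q, p⟫) A volume :=
    aux_integrableOn hbdd hA _ ((continuous_norm.pow 2).sub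
      (continuous_const.mul (continuous_const.inner continuous_id)))
  calc ∫ p in A, (‖p - q‖ ^ 2 - r)
      = ∫ p in A, ((‖p‖ ^ 2 - 2 * ⟪q, p⟫) + (‖q‖ ^ 2 - r)) := by
        exact integral_congr_ae (Filter.Eventually.of_forall fun p => hpt p)
    _ = (∫ p in A, (‖p‖ ^ 2 - 2 * ⟪q, p⟫)) + ∫ p in A, (‖q‖ ^ 2 - r : ℝ) := by
        rw [integral_add hsub (integrableOn_const
          (lt_of_le_of_lt (measure_mono (hA.trans subset_closure))
            hbdd.isCompact_closure.measure_lt_top).ne)]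
    _ = (∫ p in A, ‖p‖ ^ 2) - (∫ p in A, 2 * ⟪q, p⟫) + (‖q‖ ^ 2 - r) * (volume A).toReal := by
        rw [integral_sub h1 h2, setIntegral_const, smul_eq_mul, mul_comm, Measure.real]
    _ = (∫ p in A, ‖p‖ ^ 2) - 2 * ⟪q, ∫ p in A, p⟫ + (‖q‖ ^ 2 - r) * (volume A).toReal := by
        rw [integral_const_mul, integral_inner hid]

private lemma aux_cont_inf' {E : Type*} [TopologicalSpace E] {ι : Type*} (s : Finset ι)
    (hs : s.Nonempty) (f : ι → E → ℝ) (hf : ∀ k, Continuous (f k)) :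
    Continuous fun p => s.inf' hs fun k => f k p := by
  induction hs using Finset.Nonempty.cons_induction with
  | singleton a => simpa using hf a
  | cons a s ha hne ih =>
    have : (fun p => (Finset.cons a s ha).inf' (Finset.cons_nonempty ha) fun k => f k p)
        = fun p => min (f a p) (s.inf' hne fun k => f k p) := by
      funext p
      rw [Finset.inf'_cons (H := hne)]
    rw [this]
    exact (hf a).min ih


open RealInnerProductSpace in
/-- A Laguerre tessellation is uniquely determined (up to Lebesgue-null sets)
by the volumes and centroids of its cells. -/
theorem laguerre_tessellation_unique_from_volumes_centroids {d n : ℕ}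
    (Ω : Set (EuclideanSpace ℝ (Fin d))) (hne : Ω.Nonempty)
    (hconv : Convex ℝ Ω) (hbdd : Bornology.IsBounded Ω)
    (hcl : closure (interior Ω) = Ω)
    (x y : Fin n → EuclideanSpace ℝ (Fin d))
    (hx : Function.Injective x) (hy : Function.Injective y)
    (w v : Fin n → ℝ)
    (LagX LagY : Fin n → Set (EuclideanSpace ℝ (Fin d)))
    (hLagX : ∀ i, LagX i = {p ∈ Ω | ∀ j, ‖p - x i‖ ^ 2 - w i ≤ ‖p - x j‖ ^ 2 - w j})
    (hLagY : ∀ i, LagY i = {p ∈ Ω | ∀ j, ‖p - y i‖ ^ 2 - v i ≤ ‖p - y j‖ ^ 2 - v j})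
    (hpos : ∀ i, 0 < volume (LagX i))
    (hvol : ∀ i, volume (LagX i) = volume (LagY i))
    (hcent : ∀ i,
      (volume (LagX i)).toReal⁻¹ • (∫ p in LagX i, p)
        = (volume (LagY i)).toReal⁻¹ • (∫ p in LagY i, p)) :
    ∀ i, volume (symmDiff (LagX i) (LagY i)) = 0 := by
  classical
  intro i
  have hnE : Nonempty (Fin n) := ⟨i⟩
  set c : Fin n → EuclideanSpace ℝ (Fin d) → ℝ :=
    fun k p => ‖p - x k‖ ^ 2 - w k with hcdef
  set c' : Fin n → EuclideanSpace ℝ (Fin d) → ℝ :=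
    fun k p => ‖p - y k‖ ^ 2 - v k with hc'def
  have hccont : ∀ k, Continuous (c k) := fun k =>
    ((continuous_id.sub continuous_const).norm.pow 2).sub continuous_const
  have hc'cont : ∀ k, Continuous (c' k) := fun k =>
    ((continuous_id.sub continuous_const).norm.pow 2).sub continuous_const
  set m : EuclideanSpace ℝ (Fin d) → ℝ :=
    fun p => Finset.univ.inf' Finset.univ_nonempty fun k => c k p with hmdef
  have hmcont : Continuous m := aux_cont_inf' _ _ c hccont
  have hm_le : ∀ k p, m p ≤ c k p := fun k p => Finset.inf'_le _ (Finset.mem_univ k)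
  -- membership characterizations
  have hmemX : ∀ k p, p ∈ LagX k ↔ p ∈ Ω ∧ ∀ j, c k p ≤ c j p := by
    intro k p; rw [hLagX k]; exact Iff.rfl
  have hmemY : ∀ k p, p ∈ LagY k ↔ p ∈ Ω ∧ ∀ j, c' k p ≤ c' j p := by
    intro k p; rw [hLagY k]; exact Iff.rfl
  -- null measurability
  have hΩm : NullMeasurableSet Ω volume := hconv.nullMeasurableSet (μ := volume)
  have hXeq : ∀ k, LagX k = Ω ∩ {p | ∀ j, c k p ≤ c j p} := by
    intro k; ext p; rw [hmemX k p]; simp [Set.mem_inter_iff]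
  have hYeq : ∀ k, LagY k = Ω ∩ {p | ∀ j, c' k p ≤ c' j p} := by
    intro k; ext p; rw [hmemY k p]; simp [Set.mem_inter_iff]
  have hclosedX : ∀ k, IsClosed {p | ∀ j, c k p ≤ c j p} := by
    intro k
    have : {p | ∀ j, c k p ≤ c j p} = ⋂ j, {p | c k p ≤ c j p} := by ext p; simp
    rw [this]
    exact isClosed_iInter fun j => isClosed_le (hccont k) (hccont j)
  have hclosedY : ∀ k, IsClosed {p | ∀ j, c' k p ≤ c' j p} := by
    intro k
    have : {p | ∀ j, c' k p ≤ c' j p} = ⋂ j, {p | c' k p ≤ c' j p} := by ext p; simp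
    rw [this]
    exact isClosed_iInter fun j => isClosed_le (hc'cont k) (hc'cont j)
  have hXm : ∀ k, NullMeasurableSet (LagX k) volume := fun k => by
    rw [hXeq k]; exact hΩm.inter (hclosedX k).measurableSet.nullMeasurableSet
  have hYm : ∀ k, NullMeasurableSet (LagY k) volume := fun k => by
    rw [hYeq k]; exact hΩm.inter (hclosedY k).measurableSet.nullMeasurableSet
  -- subsets and unions
  have hXsub : ∀ k, LagX k ⊆ Ω := fun k p hp => ((hmemX k p).1 hp).1
  have hYsub : ∀ k, LagY k ⊆ Ω := fun k p hp => ((hmemY k p).1 hp).1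
  have hXunion : ⋃ k, LagX k = Ω := by
    refine Set.Subset.antisymm (Set.iUnion_subset hXsub) fun p hp => ?_
    obtain ⟨k, -, hk⟩ := Finset.exists_min_image Finset.univ (fun k => c k p)
      ⟨i, Finset.mem_univ i⟩
    exact Set.mem_iUnion.2 ⟨k, (hmemX k p).2 ⟨hp, fun j => hk j (Finset.mem_univ j)⟩⟩
  have hYunion : ⋃ k, LagY k = Ω := by
    refine Set.Subset.antisymm (Set.iUnion_subset hYsub) fun p hp => ?_
    obtain ⟨k, -, hk⟩ := Finset.exists_min_image Finset.univ (fun k => c' k p)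
      ⟨i, Finset.mem_univ i⟩
    exact Set.mem_iUnion.2 ⟨k, (hmemY k p).2 ⟨hp, fun j => hk j (Finset.mem_univ j)⟩⟩
  -- a.e. disjointness
  have hXdisj : Pairwise fun k l => AEDisjoint volume (LagX k) (LagX l) := by
    intro k l hkl
    have hane : (2 : ℝ) • (x l - x k) ≠ 0 :=
      smul_ne_zero two_ne_zero (sub_ne_zero.2 fun h => hkl (hx h).symm)
    refine measure_mono_null ?_
      (aux_hyperplane _ hane (w k - w l + ‖x l‖ ^ 2 - ‖x k‖ ^ 2))
    rintro p ⟨hpk, hpl⟩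
    have h3 : c k p = c l p :=
      le_antisymm (((hmemX k p).1 hpk).2 l) (((hmemX l p).1 hpl).2 k)
    have e1 := norm_sub_sq_real p (x k)
    have e2 := norm_sub_sq_real p (x l)
    simp only [hcdef] at h3
    show ⟪p, (2 : ℝ) • (x l - x k)⟫ = _
    rw [real_inner_smul_right, inner_sub_right]
    linarith
  have hYdisj : Pairwise fun k l => AEDisjoint volume (LagY k) (LagY l) := by
    intro k l hkl
    have hane : (2 : ℝ) • (y l - y k) ≠ 0 :=
      smul_ne_zero two_ne_zero (sub_ne_zero.2 fun h => hkl (hy h).symm)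
    refine measure_mono_null ?_
      (aux_hyperplane _ hane (v k - v l + ‖y l‖ ^ 2 - ‖y k‖ ^ 2))
    rintro p ⟨hpk, hpl⟩
    have h3 : c' k p = c' l p :=
      le_antisymm (((hmemY k p).1 hpk).2 l) (((hmemY l p).1 hpl).2 k)
    have e1 := norm_sub_sq_real p (y k)
    have e2 := norm_sub_sq_real p (y l)
    simp only [hc'def] at h3
    show ⟪p, (2 : ℝ) • (y l - y k)⟫ = _
    rw [real_inner_smul_right, inner_sub_right]
    linarith
  -- finiteness
  have hΩfin : volume Ω < ⊤ :=
    lt_of_le_of_lt (measure_mono subset_closure) hbdd.isCompact_closure.measure_lt_top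
  -- partition integral identity
  have hpart : ∀ (f : EuclideanSpace ℝ (Fin d) → ℝ), Continuous f →
      ∀ (s : Fin n → Set (EuclideanSpace ℝ (Fin d))),
        (∀ k, NullMeasurableSet (s k) volume) →
        (Pairwise fun k l => AEDisjoint volume (s k) (s l)) →
        (⋃ k, s k) = Ω →
        ∫ p in Ω, f p = ∑ k, ∫ p in s k, f p := by
    intro f hf s hsm hsd hsu
    rw [← hsu, integral_iUnion_ae hsm hsd
      (by rw [hsu]; exact aux_integrableOn hbdd Set.Subset.rfl f hf), tsum_fintype]
  -- centroid/volume consequences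
  have hvR : ∀ k, (volume (LagX k)).toReal = (volume (LagY k)).toReal := fun k => by
    rw [hvol k]
  have hvne : ∀ k, (volume (LagX k)).toReal ≠ 0 := fun k =>
    (ENNReal.toReal_pos (hpos k).ne'
      (lt_of_le_of_lt (measure_mono (hXsub k)) hΩfin).ne).ne'
  have hIeq : ∀ k, (∫ p in LagX k, p) = ∫ p in LagY k, p := by
    intro k
    have h := hcent k
    rw [← hvR k] at h
    exact smul_right_injective (EuclideanSpace ℝ (Fin d)) (inv_ne_zero (hvne k)) h
  -- the cost sums agree
  have hterm : ∀ k, (∫ p in LagY k, c k p) - ∫ p in LagX k, c k p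
      = (∫ p in LagY k, ‖p‖ ^ 2) - ∫ p in LagX k, ‖p‖ ^ 2 := by
    intro k
    simp only [hcdef]
    rw [aux_expand hbdd (hYsub k) (x k) (w k), aux_expand hbdd (hXsub k) (x k) (w k),
      hIeq k, hvR k]
    ring
  have hsum_norm : ∑ k, ∫ p in LagX k, ‖p‖ ^ 2 = ∑ k, ∫ p in LagY k, ‖p‖ ^ 2 := by
    rw [← hpart (fun p => ‖p‖ ^ 2) (continuous_norm.pow 2) LagX hXm hXdisj hXunion,
      ← hpart (fun p => ‖p‖ ^ 2) (continuous_norm.pow 2) LagY hYm hYdisj hYunion]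
  have hsumc : ∑ k, ∫ p in LagY k, c k p = ∑ k, ∫ p in LagX k, c k p := by
    have h1 : (∑ k, ∫ p in LagY k, c k p) - ∑ k, ∫ p in LagX k, c k p
        = (∑ k, ∫ p in LagY k, ‖p‖ ^ 2) - ∑ k, ∫ p in LagX k, ‖p‖ ^ 2 := by
      rw [← Finset.sum_sub_distrib, ← Finset.sum_sub_distrib]
      exact Finset.sum_congr rfl fun k _ => hterm k
    rw [← hsum_norm] at h1
    linarith [h1]
  -- min function integrals
  have hmX : ∀ k, ∫ p in LagX k, m p = ∫ p in LagX k, c k p := by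
    intro k
    refine setIntegral_congr_fun₀ (hXm k) fun p hp => ?_
    exact le_antisymm (hm_le k p)
      (Finset.le_inf' _ _ fun j _ => ((hmemX k p).1 hp).2 j)
  have hsum_m : ∑ k, ∫ p in LagY k, m p = ∑ k, ∫ p in LagX k, m p := by
    rw [← hpart m hmcont LagX hXm hXdisj hXunion, ← hpart m hmcont LagY hYm hYdisj hYunion]
  -- total excess is zero
  have hzero : ∑ k, ∫ p in LagY k, (c k p - m p) = 0 := by
    have e : ∑ k, ∫ p in LagY k, (c k p - m p)
        = (∑ k, ∫ p in LagY k, c k p) - ∑ k, ∫ p in LagY k, m p := by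
      rw [← Finset.sum_sub_distrib]
      refine Finset.sum_congr rfl fun k _ => ?_
      exact integral_sub (aux_integrableOn hbdd (hYsub k) _ (hccont k))
        (aux_integrableOn hbdd (hYsub k) _ hmcont)
    rw [e, hsumc, hsum_m, ← Finset.sum_sub_distrib]
    refine Finset.sum_eq_zero fun k _ => ?_
    rw [hmX k]; ring
  have hnonneg : ∀ k, 0 ≤ ∫ p in LagY k, (c k p - m p) := fun k =>
    integral_nonneg fun p => sub_nonneg.2 (hm_le k p)
  have hzero_i : ∫ p in LagY i, (c i p - m p) = 0 :=
    (Finset.sum_eq_zero_iff_of_nonneg fun k _ => hnonneg k).1 hzero i (Finset.mem_univ i)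
  have hae : (fun p => c i p - m p) =ᵐ[volume.restrict (LagY i)] 0 :=
    (integral_eq_zero_iff_of_nonneg (fun p => sub_nonneg.2 (hm_le i p))
      ((aux_integrableOn hbdd (hYsub i) _ (hccont i)).sub
        (aux_integrableOn hbdd (hYsub i) _ hmcont))).1 hzero_i
  have hae2 : ∀ᵐ p ∂(volume : Measure (EuclideanSpace ℝ (Fin d))),
      p ∈ LagY i → c i p - m p = 0 := (ae_restrict_iff'₀ (hYm i)).1 hae
  have h1 : volume (LagY i \ LagX i) = 0 := by
    have hbad : volume {p | ¬(p ∈ LagY i → c i p - m p = 0)} = 0 := ae_iff.1 hae2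
    refine measure_mono_null ?_ hbad
    intro p hp
    show ¬(p ∈ LagY i → c i p - m p = 0)
    intro h
    refine hp.2 ((hmemX i p).2 ⟨((hmemY i p).1 hp.1).1, fun j => ?_⟩)
    have hcm : c i p = m p := by linarith [h hp.1]
    exact hcm ▸ hm_le j p
  have hXYfin : volume (LagY i ∩ LagX i) ≠ ⊤ :=
    (lt_of_le_of_lt (measure_mono ((Set.inter_subset_left).trans (hYsub i))) hΩfin).ne
  have h2 : volume (LagX i \ LagY i) = 0 := by
    have e1 := measure_inter_add_diff₀ (μ := volume) (LagX i) (hYm i)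
    have e2 := measure_inter_add_diff₀ (μ := volume) (LagY i) (hXm i)
    rw [h1, add_zero] at e2
    rw [hvol i, ← e2, Set.inter_comm (LagX i) (LagY i)] at e1
    exact (ENNReal.add_right_inj hXYfin).1 (e1.trans (add_zero _).symm)
  rw [Set.symmDiff_def]
  exact measure_union_null h2 h1
end

section
/- Let T*: Ω → {x_1,...,x_n} be the optimal transport map (for quadratic cost) from Lebesgue measure on Ω to ν = ∑_i v_i δ_{x_i}, and let S: Ω → {x_1,...,x_n} be any admissible map (vol(S^{-1}({x_i})) = v_i for all i) such that the sets S^{-1}({x_i}) have the same centroids as the sets (T*)^{-1}({x_i}) for all i. Then ∫_Ω |x − S(x)|² dx = ∫_Ω |x − T*(x)|² dx, i.e., S is also optimal. -/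
open Set MeasureTheory

/-- Cost decomposition: the transport cost of a map `R` on a measurable set `t`
with compact closure depends only on the volumes and (integrals giving the)
centroids of the preimage cells. -/
lemma cost_decomposition {d n : ℕ}
    (t : Set (EuclideanSpace ℝ (Fin d))) (htm : MeasurableSet t)
    (hK : IsCompact (closure t))
    (x : Fin n → EuclideanSpace ℝ (Fin d)) (hx : Function.Injective x)
    (R : EuclideanSpace ℝ (Fin d) → EuclideanSpace ℝ (Fin d))
    (hR : Measurable R) (hval : ∀ p ∈ t, ∃ i, R p = x i) :
    (∫ p in t, ‖p - R p‖ ^ 2)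
      = (∫ p in t, ‖p‖ ^ 2) +
        ∑ i, ((volume (t ∩ R ⁻¹' {x i})).toReal * ‖x i‖ ^ 2
          - 2 * (inner ℝ (x i) (∫ p in t ∩ R ⁻¹' {x i}, p) : ℝ)) := by
  set A : Fin n → Set (EuclideanSpace ℝ (Fin d)) := fun i => t ∩ R ⁻¹' {x i} with hA
  have hAm : ∀ i, MeasurableSet (A i) :=
    fun i => htm.inter (hR (measurableSet_singleton _))
  have hAsub : ∀ i, A i ⊆ closure t := fun i =>
    (inter_subset_left).trans subset_closure
  have hdisj : ((Finset.univ : Finset (Fin n)) : Set (Fin n)).Pairwise (Function.onFun Disjoint A) := by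
    intro i _ j _ hij
    refine Set.disjoint_left.2 fun p hpi hpj => hij ?_
    have h1 : R p = x i := hpi.2
    have h2 : R p = x j := hpj.2
    exact hx (h1 ▸ h2)
  have hunion : ⋃ i ∈ (Finset.univ : Finset (Fin n)), A i = t := by
    ext p
    simp only [Finset.mem_univ, iUnion_true, mem_iUnion, mem_inter_iff, mem_preimage,
      mem_singleton_iff, A]
    constructor
    · rintro ⟨i, hp, _⟩; exact hp
    · intro hp; obtain ⟨i, hi⟩ := hval p hp; exact ⟨i, hp, hi⟩
  -- integrability facts on the compact closure
  have hint_id : IntegrableOn (fun p : EuclideanSpace ℝ (Fin d) => p) (closure t) volume :=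
    continuous_id.continuousOn.integrableOn_compact hK
  have hint_nsq : IntegrableOn (fun p : EuclideanSpace ℝ (Fin d) => ‖p‖ ^ 2) (closure t) volume :=
    (continuous_norm.pow 2).continuousOn.integrableOn_compact hK
  have hint_sub : ∀ i, IntegrableOn
      (fun p : EuclideanSpace ℝ (Fin d) => ‖p - x i‖ ^ 2) (closure t) volume := fun i =>
    (((continuous_id.sub continuous_const).norm).pow 2).continuousOn.integrableOn_compact hK
  have hint_inner : ∀ i, IntegrableOn
      (fun p : EuclideanSpace ℝ (Fin d) => (inner ℝ (x i) p : ℝ)) (closure t) volume := fun i =>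
    (continuous_const.inner continuous_id).continuousOn.integrableOn_compact hK
  have hEq : ∀ i, EqOn (fun p : EuclideanSpace ℝ (Fin d) => ‖p - R p‖ ^ 2)
      (fun p => ‖p - x i‖ ^ 2) (A i) := by
    intro i p hp
    have : R p = x i := hp.2
    simp [this]
  -- split the cost integral over the cells
  have hsplit : (∫ p in t, ‖p - R p‖ ^ 2)
      = ∑ i, ∫ p in A i, ‖p - x i‖ ^ 2 := by
    rw [← hunion, integral_biUnion_finset Finset.univ (fun i _ => hAm i) hdisj
      (fun i _ => ((hint_sub i).mono_set (hAsub i)).congr_fun (hEq i).symm (hAm i))]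
    exact Finset.sum_congr rfl fun i _ => setIntegral_congr_fun (hAm i) (hEq i)
  have hsplit2 : (∫ p in t, ‖p‖ ^ 2)
      = ∑ i, ∫ p in A i, ‖p‖ ^ 2 := by
    rw [← hunion, integral_biUnion_finset Finset.univ (fun i _ => hAm i) hdisj
      (fun i _ => hint_nsq.mono_set (hAsub i))]
  -- expand each cell integral
  have hcell : ∀ i, (∫ p in A i, ‖p - x i‖ ^ 2)
      = (∫ p in A i, ‖p‖ ^ 2) + ((volume (A i)).toReal * ‖x i‖ ^ 2
          - 2 * (inner ℝ (x i) (∫ p in A i, p) : ℝ)) := by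
    intro i
    have e1 : ∀ p : EuclideanSpace ℝ (Fin d),
        ‖p - x i‖ ^ 2 = ‖p‖ ^ 2 - 2 * (inner ℝ (x i) p : ℝ) + ‖x i‖ ^ 2 := by
      intro p
      rw [norm_sub_sq_real, real_inner_comm]
    have i1 : IntegrableOn (fun p : EuclideanSpace ℝ (Fin d) => ‖p‖ ^ 2) (A i) volume :=
      hint_nsq.mono_set (hAsub i)
    have i2 : IntegrableOn (fun p : EuclideanSpace ℝ (Fin d) => (inner ℝ (x i) p : ℝ)) (A i) volume :=
      (hint_inner i).mono_set (hAsub i)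
    have i3 : IntegrableOn (fun p : EuclideanSpace ℝ (Fin d) => p) (A i) volume :=
      hint_id.mono_set (hAsub i)
    calc (∫ p in A i, ‖p - x i‖ ^ 2)
        = ∫ p in A i, (‖p‖ ^ 2 - 2 * (inner ℝ (x i) p : ℝ) + ‖x i‖ ^ 2) := by
          exact setIntegral_congr_fun (hAm i) (fun p _ => e1 p)
      _ = (∫ p in A i, (‖p‖ ^ 2 - 2 * (inner ℝ (x i) p : ℝ)))
            + ∫ p in A i, (‖x i‖ ^ 2 : ℝ) := by
          exact integral_add (i1.sub (i2.const_mul 2)) (integrableOn_const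
            ((lt_of_le_of_lt (measure_mono (hAsub i)) hK.measure_lt_top).ne))
      _ = (∫ p in A i, ‖p‖ ^ 2) - 2 * (∫ p in A i, (inner ℝ (x i) p : ℝ))
            + (volume (A i)).toReal * ‖x i‖ ^ 2 := by
          rw [integral_sub i1 (i2.const_mul 2), integral_const_mul, setIntegral_const,
            smul_eq_mul, Measure.real]
      _ = (∫ p in A i, ‖p‖ ^ 2) + ((volume (A i)).toReal * ‖x i‖ ^ 2
            - 2 * (inner ℝ (x i) (∫ p in A i, p) : ℝ)) := by
          rw [integral_inner i3 (x i)]; ring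
  rw [hsplit, hsplit2]
  simp only [hcell]
  rw [Finset.sum_add_distrib]

/-- If `S` is an admissible transport map whose preimage cells have the same volumes
and centroids as those of an optimal transport map `T`, then `S` has the same
transport cost as `T`, i.e. `S` is also optimal. -/
theorem admissible_map_same_centroids_is_optimal {d n : ℕ}
    (Ω : Set (EuclideanSpace ℝ (Fin d)))
    (hconv : Convex ℝ Ω) (hbdd : Bornology.IsBounded Ω)
    (hpos : 0 < volume Ω)
    (x : Fin n → EuclideanSpace ℝ (Fin d)) (hx : Function.Injective x)
    (v : Fin n → ℝ) (hv : ∀ i, 0 < v i) (hsum : ∑ i, v i = (volume Ω).toReal)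
    (T S : EuclideanSpace ℝ (Fin d) → EuclideanSpace ℝ (Fin d))
    (hTmeas : Measurable T) (hSmeas : Measurable S)
    (hTval : ∀ p ∈ Ω, ∃ i, T p = x i) (hSval : ∀ p ∈ Ω, ∃ i, S p = x i)
    (hTadm : ∀ i, (volume (Ω ∩ T ⁻¹' {x i})).toReal = v i)
    (hSadm : ∀ i, (volume (Ω ∩ S ⁻¹' {x i})).toReal = v i)
    (hTopt : ∀ R : EuclideanSpace ℝ (Fin d) → EuclideanSpace ℝ (Fin d),
      Measurable R → (∀ p ∈ Ω, ∃ i, R p = x i) →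
      (∀ i, (volume (Ω ∩ R ⁻¹' {x i})).toReal = v i) →
      (∫ p in Ω, ‖p - T p‖ ^ 2) ≤ ∫ p in Ω, ‖p - R p‖ ^ 2)
    (hcent : ∀ i, (∫ p in Ω ∩ S ⁻¹' {x i}, p) = ∫ p in Ω ∩ T ⁻¹' {x i}, p) :
    (∫ p in Ω, ‖p - S p‖ ^ 2) = ∫ p in Ω, ‖p - T p‖ ^ 2 := by
  -- replace `Ω` by a measurable subset `t` of full measure
  obtain ⟨t, hts, htm, hteq⟩ :=
    (hconv.nullMeasurableSet (μ := volume)).exists_measurable_subset_ae_eq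
  have hrestrict : volume.restrict t = volume.restrict Ω :=
    Measure.restrict_congr_set hteq
  have hcellae : ∀ (R : EuclideanSpace ℝ (Fin d) → EuclideanSpace ℝ (Fin d)) i,
      (t ∩ R ⁻¹' {x i} : Set (EuclideanSpace ℝ (Fin d))) =ᶠ[ae volume] (Ω ∩ R ⁻¹' {x i} : Set (EuclideanSpace ℝ (Fin d))) :=
    fun R i => ae_eq_set_inter hteq (Filter.EventuallyEq.refl _ _)
  have hcellrestrict : ∀ (R : EuclideanSpace ℝ (Fin d) → EuclideanSpace ℝ (Fin d)) i,
      volume.restrict (t ∩ R ⁻¹' {x i}) = volume.restrict (Ω ∩ R ⁻¹' {x i}) :=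
    fun R i => Measure.restrict_congr_set (hcellae R i)
  have hK : IsCompact (closure t) :=
    Metric.isCompact_of_isClosed_isBounded isClosed_closure
      ((hbdd.subset hts).closure)
  have hTcost := cost_decomposition t htm hK x hx T hTmeas
    (fun p hp => hTval p (hts hp))
  have hScost := cost_decomposition t htm hK x hx S hSmeas
    (fun p hp => hSval p (hts hp))
  have key : (∫ p in t, ‖p - S p‖ ^ 2) = ∫ p in t, ‖p - T p‖ ^ 2 := by
    rw [hTcost, hScost]
    congr 1
    refine Finset.sum_congr rfl fun i _ => ?_
    have hvol : (volume (t ∩ S ⁻¹' {x i})).toReal = (volume (t ∩ T ⁻¹' {x i})).toReal := by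
      rw [measure_congr (hcellae S i), measure_congr (hcellae T i), hSadm, hTadm]
    have hcen : (∫ p in t ∩ S ⁻¹' {x i}, p) = ∫ p in t ∩ T ⁻¹' {x i}, p := by
      rw [setIntegral_congr_set (hcellae S i), setIntegral_congr_set (hcellae T i)]
      exact hcent i
    rw [hvol, hcen]
  calc (∫ p in Ω, ‖p - S p‖ ^ 2) = ∫ p in t, ‖p - S p‖ ^ 2 :=
        (setIntegral_congr_set hteq).symm
    _ = ∫ p in t, ‖p - T p‖ ^ 2 := key
    _ = ∫ p in Ω, ‖p - T p‖ ^ 2 := setIntegral_congr_set hteq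
end

section
/- Let Ω = [0,l_1] × ⋯ × [0,l_d]. Suppose a Laguerre tessellation of Ω has cells of volumes v_1,...,v_n > 0 and centroids b_1,...,b_n. Then for every i and every coordinate j, v_i l_j / (2 vol(Ω)) ≤ b_i^j ≤ l_j − v_i l_j / (2 vol(Ω)). In particular, dist(b_i, ∂Ω) ≥ min_j v_i l_j / (2 vol(Ω)). -/
open Set MeasureTheory

-- box volume
lemma vol_box {d : ℕ} (I : Fin d → Set ℝ) :
    volume {p : EuclideanSpace ℝ (Fin d) | ∀ j, p j ∈ I j} = ∏ j, volume (I j) := by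
  have h := (EuclideanSpace.volume_preserving_symm_measurableEquiv_toLp (Fin d)).measure_preimage_equiv
    (Set.pi Set.univ I)
  have hset : (MeasurableEquiv.toLp 2 (Fin d → ℝ)).symm ⁻¹' (Set.pi Set.univ I)
      = {p : EuclideanSpace ℝ (Fin d) | ∀ j, p j ∈ I j} := by
    ext p
    simp [Set.mem_pi]
  rw [hset] at h
  rw [h, volume_pi_pi]

lemma bathtub {d : ℕ} (K : Set (EuclideanSpace ℝ (Fin d))) (hK : MeasurableSet K)
    (g : EuclideanSpace ℝ (Fin d) → ℝ) (hg : Continuous g)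
    (V A : ℝ) (hV : 0 < V) (hA : 0 < A)
    (hvol : volume K = ENNReal.ofReal V)
    (hgnn : ∀ p ∈ K, 0 ≤ g p)
    (hgi : IntegrableOn g K)
    (hbound : ∀ t : ℝ, 0 < t → volume (K ∩ {p | g p ≤ t}) ≤ ENNReal.ofReal (A * t)) :
    V ^ 2 / (2 * A) ≤ ∫ p in K, g p := by
  set s : ℝ := V / A with hs
  have hs0 : 0 < s := div_pos hV hA
  have hAs : A * s = V := by rw [hs]; field_simp
  -- pointwise lower bound on super-level measures
  have key : ∀ t ∈ Ioc (0:ℝ) s,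
      ENNReal.ofReal (A * (s - t)) ≤ volume (K ∩ {p | t < g p}) := by
    intro t ht
    have h2 : K ∩ {p | t < g p} = K \ (K ∩ {p | g p ≤ t}) := by
      ext p; simp [not_le]
    rw [h2]
    have h3 : A * (s - t) = V - A * t := by rw [mul_sub, hAs]
    rw [h3, ENNReal.ofReal_sub _ (mul_nonneg hA.le ht.1.le), ← hvol]
    exact le_trans (tsub_le_tsub_left (hbound t ht.1) _) (le_measure_diff)
  -- nonnegativity a.e.
  have hgnn' : 0 ≤ᵐ[volume.restrict K] g :=
    (ae_restrict_iff' hK).mpr (Filter.Eventually.of_forall hgnn)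
  -- layer cake
  have L2 : ∫⁻ p in K, ENNReal.ofReal (g p) =
      ∫⁻ t in Ioi (0:ℝ), volume (K ∩ {p | t < g p}) := by
    rw [lintegral_eq_lintegral_meas_lt (volume.restrict K) hgnn' hg.aemeasurable]
    refine lintegral_congr_ae (Filter.Eventually.of_forall fun t => ?_)
    dsimp only
    rw [Measure.restrict_apply (measurableSet_lt measurable_const hg.measurable),
      Set.inter_comm]
  -- value of the comparison integral
  have L1 : ∫⁻ t in Ioc (0:ℝ) s, ENNReal.ofReal (A * (s - t))
      = ENNReal.ofReal (V ^ 2 / (2 * A)) := by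
    have hi : IntegrableOn (fun t : ℝ => A * (s - t)) (Ioc 0 s) := by
      apply Continuous.integrableOn_Ioc
      continuity
    rw [← ofReal_integral_eq_lintegral_ofReal hi]
    · congr 1
      rw [← intervalIntegral.integral_of_le hs0.le, intervalIntegral.integral_const_mul,
        intervalIntegral.integral_sub intervalIntegrable_const intervalIntegral.intervalIntegrable_id,
        integral_id, intervalIntegral.integral_const]
      have : V = A * s := hAs.symm
      rw [this]
      field_simp
      ring
    · refine (ae_restrict_iff' measurableSet_Ioc).mpr (Filter.Eventually.of_forall fun t ht => ?_)
      show (0:ℝ) ≤ A * (s - t)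
      have : t ≤ s := ht.2
      nlinarith
  have main : ENNReal.ofReal (V ^ 2 / (2 * A)) ≤ ∫⁻ p in K, ENNReal.ofReal (g p) := by
    rw [L2, ← L1]
    calc ∫⁻ t in Ioc (0:ℝ) s, ENNReal.ofReal (A * (s - t))
        ≤ ∫⁻ t in Ioc (0:ℝ) s, volume (K ∩ {p | t < g p}) :=
          setLIntegral_mono' measurableSet_Ioc key
      _ ≤ ∫⁻ t in Ioi (0:ℝ), volume (K ∩ {p | t < g p}) :=
          lintegral_mono_set Ioc_subset_Ioi_self
  have hfin : ∫⁻ p in K, ENNReal.ofReal (g p) ≠ ⊤ := hgi.lintegral_lt_top.ne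
  rw [integral_eq_lintegral_of_nonneg_ae hgnn' hg.aestronglyMeasurable.restrict]
  have := ENNReal.toReal_mono hfin main
  rwa [ENNReal.toReal_ofReal (by positivity)] at this

/-- Bounds on the coordinates of the centroids of the cells of a Laguerre
tessellation of a box `Ω = [0,l₁] × ⋯ × [0,l_d]`. -/
theorem laguerre_box_centroid_coordinate_bounds {d n : ℕ}
    (l : Fin d → ℝ) (hl : ∀ j, 0 < l j)
    (Ω : Set (EuclideanSpace ℝ (Fin d)))
    (hΩ : Ω = {p : EuclideanSpace ℝ (Fin d) | ∀ j, p j ∈ Set.Icc 0 (l j)})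
    (x : Fin n → EuclideanSpace ℝ (Fin d)) (hx : Function.Injective x)
    (w : Fin n → ℝ)
    (Lag : Fin n → Set (EuclideanSpace ℝ (Fin d)))
    (hLag : ∀ i, Lag i = {p ∈ Ω | ∀ j, ‖p - x i‖ ^ 2 - w i ≤ ‖p - x j‖ ^ 2 - w j})
    (v : Fin n → ℝ) (hv : ∀ i, v i = (volume (Lag i)).toReal) (hvpos : ∀ i, 0 < v i)
    (b : Fin n → EuclideanSpace ℝ (Fin d))
    (hb : ∀ i, b i = (v i)⁻¹ • ∫ p in Lag i, p) :
    ∀ (i : Fin n) (j : Fin d),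
      v i * l j / (2 * (volume Ω).toReal) ≤ b i j ∧
      b i j ≤ l j - v i * l j / (2 * (volume Ω).toReal) := by
  intro i j
  -- continuity of coordinate projections
  have hcont : ∀ k : Fin d, Continuous fun p : EuclideanSpace ℝ (Fin d) => p k :=
    fun k => (EuclideanSpace.proj k : EuclideanSpace ℝ (Fin d) →L[ℝ] ℝ).continuous
  -- Ω is closed
  have hΩclosed : IsClosed Ω := by
    rw [hΩ]
    have : {p : EuclideanSpace ℝ (Fin d) | ∀ k, p k ∈ Icc 0 (l k)}
        = ⋂ k, (fun p : EuclideanSpace ℝ (Fin d) => p k) ⁻¹' (Icc 0 (l k)) := by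
      ext p; simp
    rw [this]
    exact isClosed_iInter fun k => IsClosed.preimage (hcont k) isClosed_Icc
  -- the cell is closed, hence measurable
  have hLagClosed : IsClosed (Lag i) := by
    rw [hLag]
    have : {p ∈ Ω | ∀ k, ‖p - x i‖ ^ 2 - w i ≤ ‖p - x k‖ ^ 2 - w k}
        = Ω ∩ ⋂ k, {p : EuclideanSpace ℝ (Fin d) |
            ‖p - x i‖ ^ 2 - w i ≤ ‖p - x k‖ ^ 2 - w k} := by
      ext p; simp
    rw [this]
    refine hΩclosed.inter (isClosed_iInter fun k => isClosed_le ?_ ?_)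
    · exact (((continuous_id.sub continuous_const).norm.pow 2).sub continuous_const)
    · exact (((continuous_id.sub continuous_const).norm.pow 2).sub continuous_const)
  set K := Lag i with hK
  have hKm : MeasurableSet K := hLagClosed.measurableSet
  have hKsub : K ⊆ Ω := by rw [hK, hLag]; exact fun p hp => hp.1
  -- finiteness and value of the measure of K
  have hKfin : volume K ≠ ⊤ := by
    intro h
    have h2 := hvpos i
    rw [hv i, ← hK, h, ENNReal.toReal_top] at h2
    exact lt_irrefl 0 h2
  have hvol : volume K = ENNReal.ofReal (v i) := by
    rw [hv i, ← hK, ENNReal.ofReal_toReal hKfin]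
  -- total volume of Ω
  set P : ℝ := ∏ k, l k with hPdef
  set A : ℝ := ∏ k ∈ Finset.univ.erase j, l k with hAdef
  have hA : 0 < A := Finset.prod_pos fun k _ => hl k
  have hP : P = l j * A := (Finset.mul_prod_erase Finset.univ l (Finset.mem_univ j)).symm
  have hΩvol : volume Ω = ENNReal.ofReal P := by
    rw [hΩ, vol_box]
    rw [ENNReal.ofReal_prod_of_nonneg (fun k _ => (hl k).le)]
    refine Finset.prod_congr rfl fun k _ => ?_
    rw [Real.volume_Icc, sub_zero]
  have hT : (volume Ω).toReal = P := by
    rw [hΩvol, ENNReal.toReal_ofReal (Finset.prod_nonneg fun k _ => (hl k).le)]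
  have hAofReal : ∏ k ∈ Finset.univ.erase j, volume (Icc (0:ℝ) (l k)) = ENNReal.ofReal A := by
    rw [hAdef, ENNReal.ofReal_prod_of_nonneg (fun k _ => (hl k).le)]
    refine Finset.prod_congr rfl fun k _ => ?_
    rw [Real.volume_Icc, sub_zero]
  -- generic slab bound
  have hgen : ∀ (S : Set ℝ) (t : ℝ), 0 ≤ t →
      volume (Icc 0 (l j) ∩ S) ≤ ENNReal.ofReal t →
      volume (K ∩ {p | p j ∈ S}) ≤ ENNReal.ofReal (A * t) := by
    intro S t ht hS
    have hsubset : K ∩ {p | p j ∈ S} ⊆ {p : EuclideanSpace ℝ (Fin d) |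
        ∀ k, p k ∈ (if k = j then Icc 0 (l j) ∩ S else Icc 0 (l k))} := by
      rintro p ⟨hpK, hpt⟩ k
      have hpΩ := hKsub hpK
      rw [hΩ] at hpΩ
      by_cases hk : k = j
      · subst hk; rw [if_pos rfl]; exact ⟨hpΩ k, hpt⟩
      · rw [if_neg hk]; exact hpΩ k
    calc volume (K ∩ {p | p j ∈ S})
        ≤ ∏ k, volume (if k = j then Icc 0 (l j) ∩ S else Icc 0 (l k)) := by
          refine le_trans (measure_mono hsubset) ?_
          rw [vol_box]
      _ = volume (Icc 0 (l j) ∩ S) * ∏ k ∈ Finset.univ.erase j, volume (Icc (0:ℝ) (l k)) := by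
          rw [← Finset.mul_prod_erase Finset.univ _ (Finset.mem_univ j)]
          congr 1
          · rw [if_pos rfl]
          · refine Finset.prod_congr rfl fun k hk => ?_
            rw [if_neg (Finset.ne_of_mem_erase hk)]
      _ ≤ ENNReal.ofReal t * ENNReal.ofReal A := by
          rw [hAofReal]; exact mul_le_mul' hS le_rfl
      _ = ENNReal.ofReal (A * t) := by
          rw [← ENNReal.ofReal_mul ht, mul_comm]
  -- integrability
  have hid : IntegrableOn (fun p : EuclideanSpace ℝ (Fin d) => p) K := by
    refine Measure.integrableOn_of_bounded hKfin continuous_id.aestronglyMeasurable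
      (M := Real.sqrt (∑ k, (l k)^2)) ?_
    refine (ae_restrict_iff' hKm).mpr (Filter.Eventually.of_forall fun p hp => ?_)
    have hpΩ := hKsub hp
    rw [hΩ] at hpΩ
    rw [EuclideanSpace.norm_eq]
    apply Real.sqrt_le_sqrt
    refine Finset.sum_le_sum fun k _ => ?_
    have h1 := (hpΩ k).1
    have h2 := (hpΩ k).2
    have : ‖p k‖ ≤ l k := by rw [Real.norm_eq_abs, abs_le]; exact ⟨by linarith [hl k], h2⟩
    exact pow_le_pow_left₀ (norm_nonneg _) this 2
  have hproj : IntegrableOn (fun p : EuclideanSpace ℝ (Fin d) => p j) K :=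
    (EuclideanSpace.proj j : EuclideanSpace ℝ (Fin d) →L[ℝ] ℝ).integrable_comp hid
  have hproj' : IntegrableOn (fun p : EuclideanSpace ℝ (Fin d) => l j - p j) K :=
    ((integrableOn_const_iff).mpr (Or.inr hKfin.lt_top)).sub hproj
  -- the coordinate of the centroid
  have hswap : (∫ p in K, p) j = ∫ p in K, p j :=
    ((EuclideanSpace.proj j : EuclideanSpace ℝ (Fin d) →L[ℝ] ℝ).integral_comp_comm hid).symm
  have hbj : b i j = (v i)⁻¹ * ∫ p in K, p j := by
    rw [hb i, ← hK, PiLp.smul_apply, smul_eq_mul, hswap]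
  -- lower bound on ∫ p j
  have low : (v i) ^ 2 / (2 * A) ≤ ∫ p in K, p j := by
    refine bathtub K hKm _ (hcont j) (v i) A (hvpos i) hA hvol ?_ hproj ?_
    · intro p hp
      have hpΩ := hKsub hp; rw [hΩ] at hpΩ; exact (hpΩ j).1
    · intro t ht
      refine hgen (Iic t) t ht.le ?_
      refine le_trans (measure_mono fun y hy => (mem_Icc.mpr ⟨hy.1.1, hy.2⟩ : y ∈ Icc 0 t)) ?_
      rw [Real.volume_Icc, sub_zero]
  -- lower bound on ∫ (l j - p j)
  have high : (v i) ^ 2 / (2 * A) ≤ ∫ p in K, (l j - p j) := by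
    refine bathtub K hKm _ (continuous_const.sub (hcont j)) (v i) A (hvpos i) hA hvol ?_ hproj' ?_
    · intro p hp
      have hpΩ := hKsub hp; rw [hΩ] at hpΩ
      have := (hpΩ j).2; show 0 ≤ l j - p j; linarith
    · intro t ht
      have hsets : {p : EuclideanSpace ℝ (Fin d) | l j - p j ≤ t}
          = {p : EuclideanSpace ℝ (Fin d) | p j ∈ Ici (l j - t)} := by
        ext p; simp [mem_Ici]; constructor <;> intro h <;> linarith
      show volume (K ∩ {p | l j - p j ≤ t}) ≤ _
      rw [hsets]
      refine hgen (Ici (l j - t)) t ht.le ?_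
      refine le_trans (measure_mono fun y hy => (mem_Icc.mpr ⟨hy.2, hy.1.2⟩ : y ∈ Icc (l j - t) (l j))) ?_
      rw [Real.volume_Icc]
      apply ENNReal.ofReal_le_ofReal
      linarith
  have hconst : ∫ p in K, (l j - p j) = l j * v i - ∫ p in K, p j := by
    rw [integral_sub ((integrableOn_const_iff (C := l j)).mpr (Or.inr hKfin.lt_top)) hproj,
      setIntegral_const, hv i, ← hK, smul_eq_mul, mul_comm]
    rfl
  have hvi := hvpos i
  constructor
  · rw [hbj, hT, hP]
    have h1 : v i * l j / (2 * (l j * A)) = (v i)⁻¹ * ((v i) ^ 2 / (2 * A)) := by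
      field_simp [hvi.ne', (hl j).ne', hA.ne']
    rw [h1]
    exact mul_le_mul_of_nonneg_left low (inv_nonneg.mpr hvi.le)
  · rw [hbj, hT, hP]
    have h2 : ∫ p in K, p j ≤ l j * v i - (v i) ^ 2 / (2 * A) := by linarith
    have h3 := mul_le_mul_of_nonneg_left h2 (inv_nonneg.mpr hvi.le)
    refine le_trans h3 (le_of_eq ?_)
    field_simp [hvi.ne', (hl j).ne', hA.ne']
end

section
/- Let μ be Lebesgue measure on a convex bounded set Ω ⊂ ℝ^d with vol(Ω) > 0, fix v_1,...,v_n > 0 with ∑ v_i = vol(Ω), and for X = (x_1,...,x_n) ∈ (ℝ^d)^n define F(X) = (1/2) W₂²(μ, ∑_i v_i δ_{x_i}) where W₂ is the 2-Wasserstein distance. Then the function X ↦ F(X) − (1/2)∑_i v_i |x_i|² is concave on (ℝ^d)^n. -/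
open Set MeasureTheory

section Aux

variable {d n : ℕ}

private lemma aux_intOn {Ω : Set (EuclideanSpace ℝ (Fin d))}
    (hconv : Convex ℝ Ω) (hbdd : Bornology.IsBounded Ω)
    {f : EuclideanSpace ℝ (Fin d) → ℝ} (hf : Measurable f) {C : ℝ}
    (hC : ∀ p ∈ Ω, |f p| ≤ C) : IntegrableOn f Ω := by
  refine Measure.integrableOn_of_bounded (M := C) hbdd.measure_lt_top.ne
    hf.aestronglyMeasurable ?_
  filter_upwards [ae_restrict_mem₀ (hconv.nullMeasurableSet volume)] with p hp
  simpa using hC p hp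

private lemma aux_meas {φ : EuclideanSpace ℝ (Fin d) → Fin n} (hφ : Measurable φ)
    (X : Fin n → EuclideanSpace ℝ (Fin d)) :
    Measurable fun p => X (φ p) :=
  measurable_from_top.comp hφ

private lemma norm_comp_le (X : Fin n → EuclideanSpace ℝ (Fin d)) (i : Fin n) :
    ‖X i‖ ≤ ∑ j, ‖X j‖ :=
  Finset.single_le_sum (fun j _ => norm_nonneg (X j)) (Finset.mem_univ i)

/-- Partition identity: the integral of `‖X (φ p)‖²` over `Ω` equals `∑ v i * ‖X i‖²`. -/
private lemma partition_identity {Ω : Set (EuclideanSpace ℝ (Fin d))}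
    (hconv : Convex ℝ Ω) (hbdd : Bornology.IsBounded Ω)
    {φ : EuclideanSpace ℝ (Fin d) → Fin n} (hφ : Measurable φ)
    {v : Fin n → ℝ} (hvol : ∀ i, (volume (Ω ∩ φ ⁻¹' {i})).toReal = v i)
    (X : Fin n → EuclideanSpace ℝ (Fin d)) :
    ∫ p in Ω, ‖X (φ p)‖ ^ 2 = ∑ i, v i * ‖X i‖ ^ 2 := by
  have hpt : ∀ p, ‖X (φ p)‖ ^ 2
      = ∑ i, (φ ⁻¹' {i}).indicator (fun _ => ‖X i‖ ^ 2) p := by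
    intro p
    rw [Finset.sum_eq_single (φ p)]
    · simp [Set.indicator_of_mem, Set.mem_preimage]
    · intro j _ hj
      apply Set.indicator_of_notMem
      simp [Set.mem_preimage]
      exact fun h => hj h.symm
    · simp
  have hint : ∀ i : Fin n, IntegrableOn
      ((φ ⁻¹' {i}).indicator (fun _ => ‖X i‖ ^ 2)) Ω := by
    intro i
    refine aux_intOn hconv hbdd ?_ (C := ‖X i‖ ^ 2) ?_
    · exact (measurable_const.indicator (hφ (measurableSet_singleton i)))
    · intro p _
      rw [abs_of_nonneg (Set.indicator_nonneg (fun _ _ => by positivity) p)]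
      by_cases h : p ∈ φ ⁻¹' {i} <;> simp [h] <;> positivity
  calc ∫ p in Ω, ‖X (φ p)‖ ^ 2
      = ∫ p in Ω, ∑ i, (φ ⁻¹' {i}).indicator (fun _ => ‖X i‖ ^ 2) p := by
        exact integral_congr_ae (Filter.Eventually.of_forall hpt)
    _ = ∑ i, ∫ p in Ω, (φ ⁻¹' {i}).indicator (fun _ => ‖X i‖ ^ 2) p :=
        integral_finset_sum _ (fun i _ => hint i)
    _ = ∑ i, v i * ‖X i‖ ^ 2 := by
        refine Finset.sum_congr rfl (fun i _ => ?_)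
        rw [setIntegral_indicator (hφ (measurableSet_singleton i)),
          setIntegral_const, measureReal_def, hvol i, smul_eq_mul]

/-- Cost expansion. -/
private lemma cost_expand {Ω : Set (EuclideanSpace ℝ (Fin d))}
    (hconv : Convex ℝ Ω) (hbdd : Bornology.IsBounded Ω)
    {φ : EuclideanSpace ℝ (Fin d) → Fin n} (hφ : Measurable φ)
    {v : Fin n → ℝ} (hvol : ∀ i, (volume (Ω ∩ φ ⁻¹' {i})).toReal = v i)
    (X : Fin n → EuclideanSpace ℝ (Fin d)) :
    ∫ p in Ω, ‖p - X (φ p)‖ ^ 2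
      = (∫ p in Ω, (‖p‖ ^ 2 - 2 * inner ℝ p (X (φ p)))) + ∑ i, v i * ‖X i‖ ^ 2 := by
  obtain ⟨R, hR⟩ := hbdd.subset_closedBall 0
  set M : ℝ := ∑ j, ‖X j‖ with hM
  have hM0 : 0 ≤ M := Finset.sum_nonneg fun j _ => norm_nonneg _
  have hnorm : ∀ p ∈ Ω, ‖p‖ ≤ R := by
    intro p hp; simpa [Metric.mem_closedBall, dist_eq_norm] using hR hp
  have hmeas1 : Measurable fun p : EuclideanSpace ℝ (Fin d) =>
      ‖p‖ ^ 2 - 2 * inner ℝ p (X (φ p)) :=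
    (measurable_id.norm.pow_const 2).sub
      (((measurable_id.inner (aux_meas hφ X))).const_mul 2)
  have hint1 : IntegrableOn (fun p : EuclideanSpace ℝ (Fin d) =>
      ‖p‖ ^ 2 - 2 * inner ℝ p (X (φ p))) Ω := by
    refine aux_intOn hconv hbdd hmeas1 (C := R ^ 2 + 2 * (R * M)) ?_
    intro p hp
    have h1 : ‖p‖ ≤ R := hnorm p hp
    have h2 : ‖X (φ p)‖ ≤ M := norm_comp_le X (φ p)
    have h3 : |(inner ℝ p (X (φ p)) : ℝ)| ≤ R * M := by
      refine le_trans (abs_real_inner_le_norm _ _) ?_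
      exact mul_le_mul h1 h2 (norm_nonneg _) (le_trans (norm_nonneg p) h1)
    have h3' := abs_le.mp h3
    have hA0 : (0:ℝ) ≤ ‖p‖ ^ 2 := by positivity
    have hA : ‖p‖ ^ 2 ≤ R ^ 2 := by
      have : (0:ℝ) ≤ R := le_trans (norm_nonneg p) h1
      nlinarith [norm_nonneg p]
    rw [abs_le]
    constructor <;> nlinarith [h3'.1, h3'.2]
  have hint2 : IntegrableOn (fun p : EuclideanSpace ℝ (Fin d) =>
      ‖X (φ p)‖ ^ 2) Ω := by
    refine aux_intOn hconv hbdd ((aux_meas hφ X).norm.pow_const 2) (C := M ^ 2) ?_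
    intro p _
    rw [abs_of_nonneg (by positivity)]
    exact pow_le_pow_left₀ (norm_nonneg _) (norm_comp_le X (φ p)) 2
  have hpt : ∀ p, ‖p - X (φ p)‖ ^ 2
      = (‖p‖ ^ 2 - 2 * inner ℝ p (X (φ p))) + ‖X (φ p)‖ ^ 2 := by
    intro p
    rw [norm_sub_sq_real]
  calc ∫ p in Ω, ‖p - X (φ p)‖ ^ 2
      = ∫ p in Ω, ((‖p‖ ^ 2 - 2 * inner ℝ p (X (φ p))) + ‖X (φ p)‖ ^ 2) :=
        integral_congr_ae (Filter.Eventually.of_forall hpt)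
    _ = (∫ p in Ω, (‖p‖ ^ 2 - 2 * inner ℝ p (X (φ p))))
        + ∫ p in Ω, ‖X (φ p)‖ ^ 2 := integral_add hint1 hint2
    _ = _ := by rw [partition_identity hconv hbdd hφ hvol X]

end Aux

set_option maxHeartbeats 1000000 in
/-- Semi-concavity of the squared Wasserstein distance in the seeds:
`X ↦ F(X) − (1/2)∑ v_i |x_i|²` is concave, where `F(X)` is half the optimal
(semi-discrete) quadratic transport cost from Lebesgue measure on Ω to
`∑ v_i δ_{x_i}`, expressed as an infimum over admissible assignment maps. -/
theorem semiconcavity_of_transport_cost {d n : ℕ} (hn : 0 < n)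
    (Ω : Set (EuclideanSpace ℝ (Fin d)))
    (hconv : Convex ℝ Ω) (hbdd : Bornology.IsBounded Ω)
    (hpos : 0 < (volume Ω).toReal)
    (v : Fin n → ℝ) (hv : ∀ i, 0 < v i) (hsum : ∑ i, v i = (volume Ω).toReal)
    (F : (Fin n → EuclideanSpace ℝ (Fin d)) → ℝ)
    (hF : ∀ X, F X = (1 / 2) * sInf {c : ℝ |
      ∃ φ : EuclideanSpace ℝ (Fin d) → Fin n, Measurable φ ∧
        (∀ i, (volume (Ω ∩ φ ⁻¹' {i})).toReal = v i) ∧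
        c = ∫ p in Ω, ‖p - X (φ p)‖ ^ 2}) :
    ConcaveOn ℝ Set.univ (fun X => F X - (1 / 2) * ∑ i, v i * ‖X i‖ ^ 2) := by
  classical
  set T : (Fin n → EuclideanSpace ℝ (Fin d)) → Set ℝ := fun X =>
    {c : ℝ | ∃ φ : EuclideanSpace ℝ (Fin d) → Fin n, Measurable φ ∧
        (∀ i, (volume (Ω ∩ φ ⁻¹' {i})).toReal = v i) ∧
        c = ∫ p in Ω, ‖p - X (φ p)‖ ^ 2} with hT
  have hbdd_below : ∀ X, BddBelow (T X) := by
    intro X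
    refine ⟨0, fun c hc => ?_⟩
    obtain ⟨φ, _, _, rfl⟩ := hc
    exact integral_nonneg fun p => by positivity
  -- square norm convexity pointwise
  have sqcombo : ∀ (x y : EuclideanSpace ℝ (Fin d)) (a b : ℝ), 0 ≤ a → 0 ≤ b →
      a + b = 1 → ‖a • x + b • y‖ ^ 2 ≤ a * ‖x‖ ^ 2 + b * ‖y‖ ^ 2 := by
    intro x y a b ha hb hab
    have h1 : ‖a • x + b • y‖ ^ 2 = a^2 * ‖x‖^2 + 2 * (a * b * inner ℝ x y) + b^2 * ‖y‖^2 := by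
      rw [norm_add_sq_real, real_inner_smul_left, real_inner_smul_right,
        norm_smul, norm_smul]
      simp [Real.norm_eq_abs, abs_of_nonneg ha, abs_of_nonneg hb]
      ring
    have h2 : (inner ℝ x y : ℝ) ≤ ‖x‖ * ‖y‖ := real_inner_le_norm x y
    nlinarith [sq_nonneg (‖x‖ - ‖y‖), mul_nonneg ha hb, sq_nonneg (a - b)]
  refine ⟨convex_univ, ?_⟩
  intro X _ Y _ a b ha hb hab
  simp only [smul_eq_mul]
  by_cases hS : ∃ φ : EuclideanSpace ℝ (Fin d) → Fin n, Measurable φ ∧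
      (∀ i, (volume (Ω ∩ φ ⁻¹' {i})).toReal = v i)
  · -- nonempty case: infimum of affine functions
    have hTne : ∀ Z, (T Z).Nonempty := by
      intro Z
      obtain ⟨φ, hφm, hφv⟩ := hS
      exact ⟨_, φ, hφm, hφv, rfl⟩
    set Z := a • X + b • Y with hZ
    have hZi : ∀ i, Z i = a • X i + b • Y i := fun i => rfl
    -- key affine identity for each admissible φ
    have key : ∀ c ∈ T Z, a * (F X - (1/2) * ∑ i, v i * ‖X i‖^2)
        + b * (F Y - (1/2) * ∑ i, v i * ‖Y i‖^2)
        ≤ (1/2) * c - (1/2) * ∑ i, v i * ‖Z i‖^2 := by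
      intro c hc
      obtain ⟨φ, hφm, hφv, rfl⟩ := hc
      -- linear part
      set L : (Fin n → EuclideanSpace ℝ (Fin d)) → ℝ := fun W =>
        ∫ p in Ω, (‖p‖ ^ 2 - 2 * inner ℝ p (W (φ p))) with hL
      have hexp : ∀ W, ∫ p in Ω, ‖p - W (φ p)‖ ^ 2
          = L W + ∑ i, v i * ‖W i‖ ^ 2 := fun W =>
        cost_expand hconv hbdd hφm hφv W
      -- integrability of each linear integrand
      obtain ⟨R, hR⟩ := hbdd.subset_closedBall 0
      have hnorm : ∀ p ∈ Ω, ‖p‖ ≤ R := by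
        intro p hp; simpa [Metric.mem_closedBall, dist_eq_norm] using hR hp
      have hintW : ∀ W : Fin n → EuclideanSpace ℝ (Fin d),
          IntegrableOn (fun p => ‖p‖ ^ 2 - 2 * inner ℝ p (W (φ p))) Ω := by
        intro W
        refine aux_intOn hconv hbdd
          ((measurable_id.norm.pow_const 2).sub
            ((measurable_id.inner (aux_meas hφm W)).const_mul 2))
          (C := R ^ 2 + 2 * (R * ∑ j, ‖W j‖)) ?_
        intro p hp
        have h1 : ‖p‖ ≤ R := hnorm p hp
        have h2 : ‖W (φ p)‖ ≤ ∑ j, ‖W j‖ := norm_comp_le W (φ p)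
        have h3 : |(inner ℝ p (W (φ p)) : ℝ)| ≤ R * ∑ j, ‖W j‖ := by
          refine le_trans (abs_real_inner_le_norm _ _) ?_
          exact mul_le_mul h1 h2 (norm_nonneg _) (le_trans (norm_nonneg p) h1)
        have h3' := abs_le.mp h3
        have hA0 : (0:ℝ) ≤ ‖p‖ ^ 2 := by positivity
        have hA : ‖p‖ ^ 2 ≤ R ^ 2 := by
          have : (0:ℝ) ≤ R := le_trans (norm_nonneg p) h1
          nlinarith [norm_nonneg p]
        rw [abs_le]
        constructor <;> nlinarith [h3'.1, h3'.2]
      -- linearity of L at the convex combination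
      have hLlin : L Z = a * L X + b * L Y := by
        have hpt : ∀ p, (‖p‖ ^ 2 - 2 * inner ℝ p (Z (φ p)))
            = a * (‖p‖ ^ 2 - 2 * inner ℝ p (X (φ p)))
              + b * (‖p‖ ^ 2 - 2 * inner ℝ p (Y (φ p))) := by
          intro p
          have : (inner ℝ p (Z (φ p)) : ℝ)
              = a * inner ℝ p (X (φ p)) + b * inner ℝ p (Y (φ p)) := by
            rw [hZi, inner_add_right, real_inner_smul_right, real_inner_smul_right]
          rw [this]; nlinarith [hab]
        rw [hL]
        calc ∫ p in Ω, (‖p‖ ^ 2 - 2 * inner ℝ p (Z (φ p)))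
            = ∫ p in Ω, (a * (‖p‖ ^ 2 - 2 * inner ℝ p (X (φ p)))
                + b * (‖p‖ ^ 2 - 2 * inner ℝ p (Y (φ p)))) :=
              integral_congr_ae (Filter.Eventually.of_forall hpt)
          _ = a * L X + b * L Y := by
              rw [integral_add ((hintW X).const_mul a) ((hintW Y).const_mul b),
                integral_const_mul, integral_const_mul]
      -- lower bounds on F X, F Y via csInf_le
      have hFX : F X - (1/2) * ∑ i, v i * ‖X i‖^2 ≤ (1/2) * L X := by
        rw [hF X]
        have : sInf (T X) ≤ ∫ p in Ω, ‖p - X (φ p)‖ ^ 2 :=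
          csInf_le (hbdd_below X) ⟨φ, hφm, hφv, rfl⟩
        rw [hexp X] at this
        linarith
      have hFY : F Y - (1/2) * ∑ i, v i * ‖Y i‖^2 ≤ (1/2) * L Y := by
        rw [hF Y]
        have : sInf (T Y) ≤ ∫ p in Ω, ‖p - Y (φ p)‖ ^ 2 :=
          csInf_le (hbdd_below Y) ⟨φ, hφm, hφv, rfl⟩
        rw [hexp Y] at this
        linarith
      have hcz : (1/2) * (∫ p in Ω, ‖p - Z (φ p)‖ ^ 2)
          - (1/2) * ∑ i, v i * ‖Z i‖^2 = (1/2) * L Z := by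
        rw [hexp Z]; ring
      rw [hcz, hLlin]
      nlinarith [hFX, hFY, ha, hb]
    -- conclude via le_csInf
    have hmain : a * (F X - (1/2) * ∑ i, v i * ‖X i‖^2)
        + b * (F Y - (1/2) * ∑ i, v i * ‖Y i‖^2)
        ≤ F Z - (1/2) * ∑ i, v i * ‖Z i‖^2 := by
      have hTZ : {c : ℝ | ∃ φ : EuclideanSpace ℝ (Fin d) → Fin n, Measurable φ ∧
        (∀ i, (volume (Ω ∩ φ ⁻¹' {i})).toReal = v i) ∧
        c = ∫ p in Ω, ‖p - Z (φ p)‖ ^ 2} = T Z := rfl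
      rw [hF Z, hTZ]
      have h : 2 * (a * (F X - (1/2) * ∑ i, v i * ‖X i‖^2)
          + b * (F Y - (1/2) * ∑ i, v i * ‖Y i‖^2))
          + ∑ i, v i * ‖Z i‖^2 ≤ sInf (T Z) := by
        refine le_csInf (hTne Z) (fun c hc => ?_)
        have := key c hc
        linarith
      linarith
    exact hmain
  · -- empty case: F is constantly 0 on the relevant sets
    have hTempty : ∀ Z, T Z = ∅ := by
      intro Z
      ext c
      simp only [hT, Set.mem_setOf_eq, Set.mem_empty_iff_false, iff_false]
      rintro ⟨φ, hφm, hφv, _⟩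
      exact hS ⟨φ, hφm, hφv⟩
    have hFz : ∀ Z, F Z = 0 := by
      intro Z
      rw [hF Z]
      have : {c : ℝ | ∃ φ : EuclideanSpace ℝ (Fin d) → Fin n, Measurable φ ∧
        (∀ i, (volume (Ω ∩ φ ⁻¹' {i})).toReal = v i) ∧
        c = ∫ p in Ω, ‖p - Z (φ p)‖ ^ 2} = T Z := rfl
      rw [this, hTempty Z, Real.sInf_empty, mul_zero]
    simp only [hFz, zero_sub]
    have : ∑ i, v i * ‖(a • X + b • Y) i‖^2
        ≤ a * ∑ i, v i * ‖X i‖^2 + b * ∑ i, v i * ‖Y i‖^2 := by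
      rw [Finset.mul_sum, Finset.mul_sum, ← Finset.sum_add_distrib]
      refine Finset.sum_le_sum fun i _ => ?_
      have hcomb := sqcombo (X i) (Y i) a b ha hb hab
      have hvi := (hv i).le
      have : ‖(a • X + b • Y) i‖ ^ 2 ≤ a * ‖X i‖^2 + b * ‖Y i‖^2 := by
        simpa using hcomb
      nlinarith [this, hvi]
    linarith
end
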